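/- For all integers n ≥ 2, the chromatic number of G_2(n) is at most 2⌈log₂(n)⌉ - 1. -/

import Mathlib

/-- Vertex set of `G₂(n)`: triples `(x, y, z)` with `1 ≤ x ≤ y ≤ z ≤ n` and `x < z`. -/
def V2 (n : ℕ) :=
  {p : ℕ × ℕ × ℕ // 1 ≤ p.1 ∧ p.1 ≤ p.2.1 ∧ p.2.1 ≤ p.2.2 ∧ p.2.2 ≤ n ∧ p.1 < p.2.2}

/-- `rel2 (x,y,z) (x',y',z')` holds iff `x < x' ≤ z < z'`, `y ≤ x'` and `z ≤ y'`. -/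
def rel2 (p q : ℕ × ℕ × ℕ) : Prop :=
  p.1 < q.1 ∧ q.1 ≤ p.2.2 ∧ p.2.2 < q.2.2 ∧ p.2.1 ≤ q.1 ∧ p.2.2 ≤ q.2.1

/-- The graph `G₂(n)`. -/
def G2 (n : ℕ) : SimpleGraph (V2 n) where
  Adj a b := rel2 a.1 b.1 ∨ rel2 b.1 a.1
  symm := ⟨fun a b h => h.symm⟩
  loopless := ⟨fun a h => by rcases h with h | h <;> exact lt_irrefl _ h.1⟩


open Classical in
/-- Level of the interval `[x, z)`: the greatest `v` such that some multiple of `2^v`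
lies in `[x, z)`. -/
noncomputable def lev (x z : ℕ) : ℕ :=
  Nat.findGreatest (fun v => ∃ j, x ≤ j ∧ j < z ∧ 2 ^ v ∣ j) z

open Classical in
/-- The coloring function. -/
noncomputable def col (p : ℕ × ℕ × ℕ) : ℕ :=
  if lev p.1 p.2.2 = 0 then 0
  else 2 * lev p.1 p.2.2 - 1 +
    (if ∃ j, p.2.1 ≤ j ∧ j < p.2.2 ∧ 2 ^ lev p.1 p.2.2 ∣ j then 0 else 1)

lemma lev_spec {x z : ℕ} (hxz : x < z) :
    ∃ j, x ≤ j ∧ j < z ∧ 2 ^ lev x z ∣ j := by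
  classical
  exact Nat.findGreatest_spec (P := fun v => ∃ j, x ≤ j ∧ j < z ∧ 2 ^ v ∣ j)
    (Nat.zero_le z) ⟨x, le_refl x, hxz, by simp⟩

lemma lev_max {x z v : ℕ} (hvz : v ≤ z) (hgt : lev x z < v) :
    ¬ ∃ j, x ≤ j ∧ j < z ∧ 2 ^ v ∣ j := by
  classical
  exact Nat.findGreatest_is_greatest hgt hvz

lemma lev_lt {x z n : ℕ} (hx : 1 ≤ x) (hxz : x < z) (hz : z ≤ n) :
    lev x z < Nat.clog 2 n := by
  obtain ⟨j, hj1, hj2, hj3⟩ := lev_spec hxz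
  have hj0 : 0 < j := lt_of_lt_of_le hx hj1
  have h1 : 2 ^ lev x z ≤ j := Nat.le_of_dvd hj0 hj3
  have h2 : 2 ^ lev x z < 2 ^ Nat.clog 2 n :=
    lt_of_le_of_lt h1 (lt_of_lt_of_le hj2 (le_trans hz (Nat.le_pow_clog one_lt_two n)))
  exact (Nat.pow_lt_pow_iff_right one_lt_two).mp h2

/-- Between two distinct multiples of `2^b` there is a multiple of `2^(b+1)`. -/
lemma step {b m1 m2 : ℕ} (h0 : 0 < m1) (hd1 : 2 ^ b ∣ m1) (hd2 : 2 ^ b ∣ m2)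
    (hlt : m1 < m2) : ∃ t, m1 ≤ t ∧ t ≤ m2 ∧ 2 ^ (b + 1) ∣ t := by
  have hle : m1 + 2 ^ b ≤ m2 := by
    have hdvd : 2 ^ b ∣ m2 - m1 := Nat.dvd_sub hd2 hd1
    have := Nat.le_of_dvd (by omega) hdvd
    omega
  obtain ⟨c, hc⟩ := hd1
  rcases Nat.even_or_odd c with he | ho
  · obtain ⟨d, hd⟩ := he
    exact ⟨m1, le_refl _, le_of_lt hlt, d, by rw [hc, hd]; ring⟩
  · obtain ⟨d, hd⟩ := ho
    exact ⟨m1 + 2 ^ b, Nat.le_add_right _ _, hle, d + 1, by rw [hc, hd]; ring⟩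

/-- Uniqueness of the multiple of `2^(lev x z)` in `[x, z)`. -/
lemma uniq {x z m1 m2 : ℕ} (hx : 1 ≤ x)
    (h1 : x ≤ m1) (h1' : m1 < z) (hd1 : 2 ^ lev x z ∣ m1)
    (h2 : x ≤ m2) (h2' : m2 < z) (hd2 : 2 ^ lev x z ∣ m2) : m1 = m2 := by
  have key : ∀ a b : ℕ, x ≤ a → a < z → 2 ^ lev x z ∣ a →
      x ≤ b → b < z → 2 ^ lev x z ∣ b → a < b → False := by
    intro a b ha ha' hda hb hb' hdb hab
    obtain ⟨t, ht1, ht2, ht3⟩ := step (lt_of_lt_of_le hx ha) hda hdb hab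
    have hb2 : lev x z + 1 ≤ z := by
      have : 2 ^ lev x z ≤ a := Nat.le_of_dvd (by omega) hda
      have := Nat.lt_two_pow_self (n := lev x z)
      omega
    exact lev_max hb2 (Nat.lt_succ_self _) ⟨t, le_trans ha ht1, by omega, ht3⟩
  rcases lt_trichotomy m1 m2 with h | h | h
  · exact absurd (key m1 m2 h1 h1' hd1 h2 h2' hd2 h) (fun h => h)
  · exact h
  · exact absurd (key m2 m1 h2 h2' hd2 h1 h1' hd1 h) (fun h => h)

lemma col_cases (x y z : ℕ) :
    (lev x z = 0 ∧ col (x, y, z) = 0) ∨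
    (1 ≤ lev x z ∧ (col (x, y, z) = 2 * lev x z - 1 ∨ col (x, y, z) = 2 * lev x z)) := by
  classical
  by_cases h : lev x z = 0
  · exact Or.inl ⟨h, by simp [col, h]⟩
  · refine Or.inr ⟨by omega, ?_⟩
    by_cases h2 : ∃ j, y ≤ j ∧ j < z ∧ 2 ^ lev x z ∣ j
    · exact Or.inl (by simp [col, h, h2])
    · refine Or.inr ?_
      simp only [col, h, if_false, h2, if_neg, if_pos]
      omega

lemma col_ne (x y z x' y' z' : ℕ)
    (hx : 1 ≤ x) (hxy : x ≤ y) (hyz : y ≤ z) (hxz : x < z)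
    (hx' : 1 ≤ x') (hxy' : x' ≤ y') (hyz' : y' ≤ z') (hxz' : x' < z')
    (h1 : x < x') (h2 : x' ≤ z) (h3 : z < z') (h4 : y ≤ x') (h5 : z ≤ y') :
    col (x, y, z) ≠ col (x', y', z') := by
  classical
  by_cases hbb : lev x z = lev x' z'
  · -- same level
    obtain ⟨m, hm1, hm2, hm3⟩ := lev_spec hxz
    obtain ⟨m', hm1', hm2', hm3'⟩ := lev_spec hxz'
    rw [← hbb] at hm3'
    -- show m' < z
    have hmz' : m' < z := by
      by_contra hcon
      push_neg at hcon
      obtain ⟨t, ht1, ht2, ht3⟩ := step (lt_of_lt_of_le hx hm1) hm3 hm3'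
        (lt_of_lt_of_le hm2 hcon)
    -- b+1 ≤ z
      have hb2 : lev x z + 1 ≤ z := by
        have : 2 ^ lev x z ≤ m := Nat.le_of_dvd (by omega) hm3
        have := Nat.lt_two_pow_self (n := lev x z)
        omega
      rcases lt_or_ge t z with htz | htz
      · exact lev_max hb2 (Nat.lt_succ_self _) ⟨t, le_trans hm1 ht1, htz, ht3⟩
      · refine lev_max (x := x') (z := z') (v := lev x' z' + 1) (by omega)
          (Nat.lt_succ_self _) ⟨t, by omega, by omega, ?_⟩
        rw [← hbb]; exact ht3
    -- so m = m', hence x' ≤ m < z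
    have hmm : m = m' := uniq hx hm1 hm2 hm3 (le_trans (le_of_lt h1) hm1') hmz' hm3'
    have hxm : x' ≤ m := hmm ▸ hm1'
    -- level is at least 1
    have hb1 : 1 ≤ lev x z := by
      by_contra hcon
      have hb0 : lev x z = 0 := by omega
      have := uniq hx (le_refl x) hxz (by rw [hb0]; simp) hm1 hm2 hm3
      omega
    -- the bit for (x,y,z) is true
    have hP : ∃ j, y ≤ j ∧ j < z ∧ 2 ^ lev x z ∣ j :=
      ⟨m, le_trans h4 hxm, hm2, hm3⟩
    -- the bit for (x',y',z') is false
    have hQ : ¬ ∃ j, y' ≤ j ∧ j < z' ∧ 2 ^ lev x' z' ∣ j := by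
      rintro ⟨j, hj1, hj2, hj3⟩
      have hmj : m = j := by
        refine uniq hx' hxm (by omega) (by rw [← hbb]; exact hm3)
          (by omega) hj2 hj3
      omega
    have hb1' : ¬ lev x z = 0 := by omega
    have hb1'' : ¬ lev x' z' = 0 := by rw [← hbb]; exact hb1'
    have e1 : col (x, y, z) = 2 * lev x z - 1 := by
      simp only [col, if_neg hb1', if_pos hP]
      omega
    have e2 : col (x', y', z') = 2 * lev x z := by
      simp only [col, if_neg hb1'', if_neg hQ]
      rw [← hbb]
      omega
    omega
  · -- different levels
    rcases col_cases x y z with ⟨hb, hc⟩ | ⟨hb, hc | hc⟩ <;>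
      rcases col_cases x' y' z' with ⟨hb', hc'⟩ | ⟨hb', hc' | hc'⟩ <;>
      omega

theorem stmt_8 (n : ℕ) (hn : 2 ≤ n) :
    (G2 n).chromaticNumber ≤ ((2 * Nat.clog 2 n - 1 : ℕ) : ℕ∞) := by
  have hk : 1 ≤ Nat.clog 2 n := by
    by_contra h
    have h0 : Nat.clog 2 n = 0 := by omega
    have := Nat.le_pow_clog one_lt_two n
    rw [h0] at this
    simp at this
    omega
  have hcol : (G2 n).Colorable (2 * Nat.clog 2 n - 1) := by
    refine ⟨SimpleGraph.Coloring.mk (fun v => ⟨col v.1, ?_⟩) ?_⟩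
    · obtain ⟨⟨x, y, z⟩, hx, hxy, hyz, hzn, hxz⟩ := v
      dsimp only at hx hxy hyz hzn hxz ⊢
      have hlev := lev_lt hx hxz hzn
      show col (x, y, z) < 2 * Nat.clog 2 n - 1
      rcases col_cases x y z with ⟨hb, hc⟩ | ⟨hb, hc | hc⟩ <;> omega
    · rintro ⟨⟨x, y, z⟩, hx, hxy, hyz, hzn, hxz⟩ ⟨⟨x', y', z'⟩, hx', hxy', hyz', hzn', hxz'⟩ hadj heq
      have hv : col (x, y, z) = col (x', y', z') := congrArg Fin.val heq
      change rel2 _ _ ∨ rel2 _ _ at hadj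
      rcases hadj with ⟨r1, r2, r3, r4, r5⟩ | ⟨r1, r2, r3, r4, r5⟩
      · exact col_ne x y z x' y' z' hx hxy hyz hxz hx' hxy' hyz' hxz' r1 r2 r3 r4 r5 hv
      · exact col_ne x' y' z' x y z hx' hxy' hyz' hxz' hx hxy hyz hxz r1 r2 r3 r4 r5 hv.symm
  exact hcol.chromaticNumber_le
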